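/- For every integer d ≥ 0, the d-th power of F_tot := a_0 + Σ_{y=1}^{L} a_y^+ + Σ_{x=1}^{L} a_x^− applied to Ω := u_0^{⊗(L+1)} admits the normally ordered expansion F_tot^d Ω = [d]_{q²}! · Σ_{(X,Y)} ( 1[|X|+|Y| = d] · a^−_{x_{|X|}} ⋯ a^−_{x_1} · a^+_{y_1} ⋯ a^+_{y_{|Y|}} + 1[|X|+|Y| = d−1] · a^−_{x_{|X|}} ⋯ a^−_{x_1} · a_0 · a^+_{y_1} ⋯ a^+_{y_{|Y|}} ) Ω, where the sum runs over all pairs of disjoint subsets X = {x_1 < ⋯ < x_{|X|}} and Y = {y_1 < ⋯ < y_{|Y|}} of {1,…,L}, the a^− factors appear in decreasing order of index from left to right, and the a^+ factors appear in increasing order of index from left to right. -/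

import Mathlib

open Matrix BigOperators Finset

noncomputable section

namespace Stmt6

/-- Index of the tensor basis of `W = V^{⊗(L+1)}`, where `V = ℝ³` has ordered basis
`(u₋₁, u₀, u₁)` encoded as `Fin 3` (`0 ↦ u₋₁`, `1 ↦ u₀`, `2 ↦ u₁`); tensor factors
are indexed by the sites `0,1,…,L`. -/
abbrev Conf (L : ℕ) := Fin (L + 1) → Fin 3

/-- The matrix `E`: `E u₀ = u₋₁`, `E u₋₁ = E u₁ = 0`. -/
def Emat : Matrix (Fin 3) (Fin 3) ℝ := fun a b => if a = 0 ∧ b = 1 then 1 else 0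

/-- The matrix `F`: `F u₀ = u₁`, `F u₋₁ = F u₁ = 0`. -/
def Fmat : Matrix (Fin 3) (Fin 3) ℝ := fun a b => if a = 2 ∧ b = 1 then 1 else 0

/-- `K = diag(q, q⁻¹, 1)` (entries in the order `u₋₁, u₀, u₁`). -/
def Kmat (q : ℝ) : Matrix (Fin 3) (Fin 3) ℝ := Matrix.diagonal ![q, q⁻¹, 1]

/-- `k = diag(q⁻¹, q², q⁻¹)` (entries in the order `u₋₁, u₀, u₁`). -/
def kmat (q : ℝ) : Matrix (Fin 3) (Fin 3) ℝ := Matrix.diagonal ![q⁻¹, q ^ 2, q⁻¹]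

/-- `f = E + Q·F`. -/
def fmat (Q : ℝ) : Matrix (Fin 3) (Fin 3) ℝ := Emat + Q • Fmat

/-- `a₀ = f ⊗ (K⁻¹)^{⊗L}` as a matrix in the tensor basis of `W`. -/
def a0 (L : ℕ) (q Q : ℝ) : Matrix (Conf L) (Conf L) ℝ :=
  fun b b' => ∏ s : Fin (L + 1),
    (if s = 0 then fmat Q (b s) (b' s) else (Kmat q)⁻¹ (b s) (b' s))

/-- `a_j⁺ = Id^{⊗j} ⊗ E ⊗ (K⁻¹)^{⊗(L−j)}` (the `E` factor at site `j`). -/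
def aP (L : ℕ) (q : ℝ) (j : ℕ) : Matrix (Conf L) (Conf L) ℝ :=
  fun b b' => ∏ s : Fin (L + 1),
    (if (s : ℕ) < j then (if b s = b' s then (1 : ℝ) else 0)
     else if (s : ℕ) = j then Emat (b s) (b' s)
     else (Kmat q)⁻¹ (b s) (b' s))

/-- `a_j⁻ = Q · k^{⊗j} ⊗ F ⊗ (K⁻¹)^{⊗(L−j)}` (the `F` factor at site `j`). -/
def aM (L : ℕ) (q Q : ℝ) (j : ℕ) : Matrix (Conf L) (Conf L) ℝ :=
  fun b b' => Q * ∏ s : Fin (L + 1),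
    (if (s : ℕ) < j then kmat q (b s) (b' s)
     else if (s : ℕ) = j then Fmat (b s) (b' s)
     else (Kmat q)⁻¹ (b s) (b' s))


/-- The `q²`-deformed integer `[n]_{q²} = (1 − q^{2n})/(1 − q²)`. -/
def qInt (q : ℝ) (n : ℕ) : ℝ := (1 - q ^ (2 * n)) / (1 - q ^ 2)

/-- The `q²`-deformed factorial `[d]_{q²}! = [1]_{q²} ⋯ [d]_{q²}`, with `[0]_{q²}! = 1`. -/
def qFact (q : ℝ) : ℕ → ℝ
  | 0 => 1
  | n + 1 => qFact q n * qInt q (n + 1)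

/-- `F_tot = a₀ + Σ_{y=1}^{L} a_y⁺ + Σ_{x=1}^{L} a_x⁻`. -/
def Ftot (L : ℕ) (q Q : ℝ) : Matrix (Conf L) (Conf L) ℝ :=
  a0 L q Q + ∑ y ∈ Finset.Icc 1 L, aP L q y + ∑ x ∈ Finset.Icc 1 L, aM L q Q x

/-- The vector `Ω = u₀^{⊗(L+1)}`, i.e. the tensor basis vector of the configuration
with every site equal to `u₀`. -/
def Omega (L : ℕ) : Conf L → ℝ := fun b => if b = fun _ => 1 then 1 else 0

/-- The ordered product `a⁻_{x_{|X|}} ⋯ a⁻_{x_1}` over `X = {x_1 < ⋯ < x_{|X|}}`,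
factors in decreasing order of index from left to right. -/
def prodAM (L : ℕ) (q Q : ℝ) (X : Finset ℕ) : Matrix (Conf L) (Conf L) ℝ :=
  (((X.sort (· ≤ ·)).reverse).map (aM L q Q)).prod

/-- The ordered product `a⁺_{y_1} ⋯ a⁺_{y_{|Y|}}` over `Y = {y_1 < ⋯ < y_{|Y|}}`,
factors in increasing order of index from left to right. -/
def prodAP (L : ℕ) (q : ℝ) (Y : Finset ℕ) : Matrix (Conf L) (Conf L) ℝ :=
  ((Y.sort (· ≤ ·)).map (aP L q)).prod

-- my auxiliary defs
def Ki (q : ℝ) : Matrix (Fin 3) (Fin 3) ℝ := Matrix.diagonal ![q⁻¹, q, 1]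

lemma Kinv_eq {q : ℝ} (hq : q ≠ 0) : (Kmat q)⁻¹ = Ki q := by
  apply Matrix.inv_eq_right_inv
  rw [Kmat, Ki, Matrix.diagonal_mul_diagonal]
  ext a b
  fin_cases a <;> fin_cases b <;>
    simp [Matrix.diagonal, Matrix.one_apply] <;> field_simp

def T (L : ℕ) (g : Fin (L+1) → Matrix (Fin 3) (Fin 3) ℝ) : Matrix (Conf L) (Conf L) ℝ :=
  fun b b' => ∏ s, g s (b s) (b' s)

lemma T_mul {L : ℕ} (g h : Fin (L+1) → Matrix (Fin 3) (Fin 3) ℝ) :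
    T L g * T L h = T L (fun s => g s * h s) := by
  ext b b''
  simp only [Matrix.mul_apply, T]
  rw [Finset.prod_univ_sum (fun _ => (univ : Finset (Fin 3)))]
  rw [← Fintype.piFinset_univ]
  apply Finset.sum_congr rfl
  intro x _
  rw [← Finset.prod_mul_distrib]


section sitefacts
variable {q Q : ℝ} (hq : q ≠ 0)

lemma s_EKi (hq : q ≠ 0) : Emat * Ki q = (q^2) • (Ki q * Emat) := by
  ext a b
  fin_cases a <;> fin_cases b <;>
    simp [Emat, Ki, Matrix.mul_apply, Fin.sum_univ_three, Matrix.diagonal] <;>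
    field_simp <;> ring

lemma s_Ek (hq : q ≠ 0) : Emat * kmat q = (q^3) • (kmat q * Emat) := by
  ext a b
  fin_cases a <;> fin_cases b <;>
    simp [Emat, kmat, Matrix.mul_apply, Fin.sum_univ_three, Matrix.diagonal] <;>
    field_simp <;> ring

lemma s_Fk (hq : q ≠ 0) : Fmat * kmat q = (q^3) • (kmat q * Fmat) := by
  ext a b
  fin_cases a <;> fin_cases b <;>
    simp [Fmat, kmat, Matrix.mul_apply, Fin.sum_univ_three, Matrix.diagonal] <;>
    field_simp <;> ring

lemma s_KiF (hq : q ≠ 0) : Ki q * Fmat = q⁻¹ • (Fmat * Ki q) := by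
  ext a b
  fin_cases a <;> fin_cases b <;>
    simp [Fmat, Ki, Matrix.mul_apply, Fin.sum_univ_three, Matrix.diagonal] <;>
    field_simp <;> ring

lemma s_fk (hq : q ≠ 0) : fmat Q * kmat q = (q^3) • (kmat q * fmat Q) := by
  ext a b
  fin_cases a <;> fin_cases b <;>
    simp [fmat, Emat, Fmat, kmat, Matrix.mul_apply, Fin.sum_univ_three, Matrix.diagonal] <;>
    field_simp <;> ring

lemma s_EE : Emat * Emat = 0 := by
  ext a b
  fin_cases a <;> fin_cases b <;>
    simp [Emat, Matrix.mul_apply, Fin.sum_univ_three]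

lemma s_FF : Fmat * Fmat = 0 := by
  ext a b
  fin_cases a <;> fin_cases b <;>
    simp [Fmat, Matrix.mul_apply, Fin.sum_univ_three]

lemma s_EF : Emat * Fmat = 0 := by
  ext a b
  fin_cases a <;> fin_cases b <;>
    simp [Emat, Fmat, Matrix.mul_apply, Fin.sum_univ_three]

lemma s_FE : Fmat * Emat = 0 := by
  ext a b
  fin_cases a <;> fin_cases b <;>
    simp [Emat, Fmat, Matrix.mul_apply, Fin.sum_univ_three]

lemma s_ff : fmat Q * fmat Q = 0 := by
  ext a b
  fin_cases a <;> fin_cases b <;>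
    simp [fmat, Emat, Fmat, Matrix.mul_apply, Fin.sum_univ_three]

lemma s_Kik : Ki q * kmat q = kmat q * Ki q := by
  ext a b
  fin_cases a <;> fin_cases b <;>
    simp [Ki, kmat, Matrix.mul_apply, Fin.sum_univ_three, Matrix.diagonal] <;> ring

end sitefacts

section Tlem
variable {L : ℕ} {q Q : ℝ}
lemma T_qcF {g h : Fin (L+1) → Matrix (Fin 3) (Fin 3) ℝ} (c : Fin (L+1) → ℝ)
    (hc : ∀ s, g s * h s = c s • (h s * g s)) :
    T L g * T L h = (∏ s, c s) • (T L h * T L g) := by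
  rw [T_mul, T_mul]
  ext b b'
  simp only [T, Matrix.smul_apply, smul_eq_mul]
  calc (∏ s, (fun s => g s * h s) s (b s) (b' s))
      = ∏ s, (c s * (h s * g s) (b s) (b' s)) := by
        refine Finset.prod_congr rfl fun s _ => ?_
        show (g s * h s) (b s) (b' s) = _
        rw [hc s]; simp [Matrix.smul_apply]
    _ = (∏ s, c s) * ∏ s, (h s * g s) (b s) (b' s) := by
        rw [Finset.prod_mul_distrib]

lemma T_zero {g h : Fin (L+1) → Matrix (Fin 3) (Fin 3) ℝ} (s₀ : Fin (L+1))
    (h0 : g s₀ * h s₀ = 0) : T L g * T L h = 0 := by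
  rw [T_mul]
  ext b b'
  simp only [T, Matrix.zero_apply]
  refine Finset.prod_eq_zero (Finset.mem_univ s₀) ?_
  rw [h0]; simp

lemma prod_ite_one {α : Type*} [Fintype α] [DecidableEq α] (s₀ : α) (c₀ : ℝ) :
    (∏ s : α, if s = s₀ then c₀ else 1) = c₀ := by
  rw [Finset.prod_ite_eq' univ s₀ (fun _ => c₀)]
  simp

lemma prod_ite_two {α : Type*} [Fintype α] [DecidableEq α] (s₀ s₁ : α) (hne : s₀ ≠ s₁)
    (c₀ c₁ : ℝ) :
    (∏ s : α, if s = s₀ then c₀ else if s = s₁ then c₁ else 1) = c₀ * c₁ := by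
  rw [← Finset.mul_prod_erase univ _ (Finset.mem_univ s₀)]
  rw [if_pos rfl]
  have h1 : s₁ ∈ (univ : Finset α).erase s₀ := by simp [Finset.mem_erase, hne.symm]
  rw [← Finset.mul_prod_erase _ _ h1, if_neg hne.symm, if_pos rfl]
  rw [Finset.prod_eq_one, mul_one]
  intro x hx
  simp only [Finset.mem_erase] at hx
  rw [if_neg hx.2.1, if_neg hx.1]

lemma T_qc1 {g h : Fin (L+1) → Matrix (Fin 3) (Fin 3) ℝ} (s₀ : Fin (L+1)) (c₀ : ℝ)
    (h0 : g s₀ * h s₀ = c₀ • (h s₀ * g s₀))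
    (hrest : ∀ s, s ≠ s₀ → g s * h s = h s * g s) :
    T L g * T L h = c₀ • (T L h * T L g) := by
  have := T_qcF (fun s => if s = s₀ then c₀ else 1) (g := g) (h := h) ?_
  · rwa [prod_ite_one] at this
  · intro s
    by_cases hs : s = s₀
    · subst hs; simpa using h0
    · simp [hs, hrest s hs]

lemma T_qc2 {g h : Fin (L+1) → Matrix (Fin 3) (Fin 3) ℝ} (s₀ s₁ : Fin (L+1)) (hne : s₀ ≠ s₁)
    (c₀ c₁ : ℝ)
    (h0 : g s₀ * h s₀ = c₀ • (h s₀ * g s₀))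
    (h1 : g s₁ * h s₁ = c₁ • (h s₁ * g s₁))
    (hrest : ∀ s, s ≠ s₀ → s ≠ s₁ → g s * h s = h s * g s) :
    T L g * T L h = (c₀ * c₁) • (T L h * T L g) := by
  have := T_qcF (fun s => if s = s₀ then c₀ else if s = s₁ then c₁ else 1) (g := g) (h := h) ?_
  · rwa [prod_ite_two s₀ s₁ hne] at this
  · intro s
    by_cases hs : s = s₀
    · subst hs; simpa using h0
    · by_cases hs' : s = s₁
      · subst hs'; simpa [hs] using h1
      · simp [hs, hs', hrest s hs hs']

lemma qc_of_T {A B : Matrix (Conf L) (Conf L) ℝ}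
    {g h : Fin (L+1) → Matrix (Fin 3) (Fin 3) ℝ} {a b c : ℝ}
    (hA : A = a • T L g) (hB : B = b • T L h)
    (hTT : T L g * T L h = c • (T L h * T L g)) : A * B = c • (B * A) := by
  subst hA hB
  rw [smul_mul_assoc, mul_smul_comm, hTT, smul_mul_assoc, mul_smul_comm]
  rw [smul_smul, smul_smul, smul_smul, smul_smul]
  ring_nf

lemma qc_rev {A B : Matrix (Conf L) (Conf L) ℝ} {c : ℝ} (h : A * B = c • (B * A))
    (hc : c ≠ 0) : B * A = c⁻¹ • (A * B) := by
  rw [h, smul_smul, inv_mul_cancel₀ hc, one_smul]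


end Tlem

section Gen
-- site functions
def gP (L : ℕ) (q : ℝ) (j : ℕ) : Fin (L+1) → Matrix (Fin 3) (Fin 3) ℝ :=
  fun s => if (s : ℕ) < j then 1 else if (s : ℕ) = j then Emat else Ki q
def gM (L : ℕ) (q : ℝ) (j : ℕ) : Fin (L+1) → Matrix (Fin 3) (Fin 3) ℝ :=
  fun s => if (s : ℕ) < j then kmat q else if (s : ℕ) = j then Fmat else Ki q
def g0 (L : ℕ) (q Q : ℝ) : Fin (L+1) → Matrix (Fin 3) (Fin 3) ℝ :=
  fun s => if s = 0 then fmat Q else Ki q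

variable {L : ℕ} {q Q : ℝ}

lemma aP_eq (hq : q ≠ 0) (j : ℕ) : aP L q j = (1:ℝ) • T L (gP L q j) := by
  rw [one_smul]
  ext b b'
  show (∏ s : Fin (L+1), _) = ∏ s : Fin (L+1), _
  refine Finset.prod_congr rfl fun s _ => ?_
  simp only [gP, Kinv_eq hq]
  split_ifs <;> simp_all [Matrix.one_apply]

lemma aM_eq (hq : q ≠ 0) (j : ℕ) : aM L q Q j = Q • T L (gM L q j) := by
  ext b b'
  show Q * (∏ s : Fin (L+1), _) = Q * ∏ s : Fin (L+1), _
  congr 1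
  refine Finset.prod_congr rfl fun s _ => ?_
  simp only [gM, Kinv_eq hq]
  split_ifs <;> rfl

lemma a0_eq (hq : q ≠ 0) : a0 L q Q = (1:ℝ) • T L (g0 L q Q) := by
  rw [one_smul]
  ext b b'
  show (∏ s : Fin (L+1), _) = ∏ s : Fin (L+1), _
  refine Finset.prod_congr rfl fun s _ => ?_
  simp only [g0, Kinv_eq hq]
  split_ifs <;> rfl

-- helper values of site functions
lemma gP_lt {j : ℕ} {s : Fin (L+1)} (h : (s:ℕ) < j) : gP L q j s = 1 := by simp [gP, h]
lemma gP_eq' {j : ℕ} {s : Fin (L+1)} (h : (s:ℕ) = j) : gP L q j s = Emat := by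
  simp [gP, h]
lemma gP_gt {j : ℕ} {s : Fin (L+1)} (h : j < (s:ℕ)) : gP L q j s = Ki q := by
  simp [gP, Nat.lt_asymm h, (Nat.ne_of_gt h)]
lemma gM_lt {j : ℕ} {s : Fin (L+1)} (h : (s:ℕ) < j) : gM L q j s = kmat q := by simp [gM, h]
lemma gM_eq' {j : ℕ} {s : Fin (L+1)} (h : (s:ℕ) = j) : gM L q j s = Fmat := by
  simp [gM, h]
lemma gM_gt {j : ℕ} {s : Fin (L+1)} (h : j < (s:ℕ)) : gM L q j s = Ki q := by
  simp [gM, Nat.lt_asymm h, (Nat.ne_of_gt h)]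
lemma g0_zero : g0 L q Q 0 = fmat Q := by simp [g0]
lemma g0_pos {s : Fin (L+1)} (h : s ≠ 0) : g0 L q Q s = Ki q := by simp [g0, h]

-- relation A
lemma relA (hq : q ≠ 0) {i j : ℕ} (hij : i < j) (hjL : j ≤ L) :
    aP L q j * aP L q i = (q^2) • (aP L q i * aP L q j) := by
  refine qc_of_T (aP_eq hq j) (aP_eq hq i) ?_
  refine T_qc1 ⟨j, by omega⟩ _ ?_ ?_
  · rw [gP_eq' (by simp), gP_gt (by simp [hij])]
    exact s_EKi hq
  · intro s hs
    have hsj : (s:ℕ) ≠ j := fun h => hs (Fin.ext h)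
    by_cases h1 : (s:ℕ) < j
    · rw [gP_lt h1, one_mul, mul_one]
    · have hgt : j < (s:ℕ) := by omega
      rw [gP_gt hgt, gP_gt (by omega)]

-- relation B
lemma relB (hq : q ≠ 0) {i j : ℕ} (hij : i < j) (hjL : j ≤ L) :
    aM L q Q i * aM L q Q j = (q^2) • (aM L q Q j * aM L q Q i) := by
  have key : T L (gM L q i) * T L (gM L q j)
      = (q^3 * q⁻¹) • (T L (gM L q j) * T L (gM L q i)) := by
    refine T_qc2 ⟨i, by omega⟩ ⟨j, by omega⟩ (by simp [Fin.ext_iff]; omega) _ _ ?_ ?_ ?_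
    · rw [gM_eq' (by simp), gM_lt (by simp [hij])]
      exact s_Fk hq
    · rw [gM_gt (by simp [hij]), gM_eq' (by simp)]
      exact s_KiF hq
    · intro s hs hs'
      have hsi : (s:ℕ) ≠ i := fun h => hs (Fin.ext h)
      have hsj : (s:ℕ) ≠ j := fun h => hs' (Fin.ext h)
      by_cases h1 : (s:ℕ) < i
      · rw [gM_lt h1, gM_lt (by omega)]
      · by_cases h2 : (s:ℕ) < j
        · rw [gM_gt (by omega), gM_lt h2]
          exact s_Kik
        · rw [gM_gt (by omega), gM_gt (by omega)]
  have := qc_of_T (aM_eq (Q := Q) hq i) (aM_eq (Q := Q) hq j) key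
  rw [this]
  congr 1
  field_simp

-- relation C
lemma relC (hq : q ≠ 0) {x y : ℕ} (hxy : x ≠ y) (hx1 : 1 ≤ x) (hxL : x ≤ L) (hyL : y ≤ L) :
    aP L q y * aM L q Q x = (q^2) • (aM L q Q x * aP L q y) := by
  rcases lt_or_gt_of_ne hxy with h | h
  · -- x < y : one special site y
    refine qc_of_T (aP_eq hq y) (aM_eq (Q := Q) hq x) ?_
    refine T_qc1 ⟨y, by omega⟩ _ ?_ ?_
    · rw [gP_eq' (by simp), gM_gt (by simp [h])]
      exact s_EKi hq
    · intro s hs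
      have hsy : (s:ℕ) ≠ y := fun hh => hs (Fin.ext hh)
      by_cases h1 : (s:ℕ) < y
      · rw [gP_lt h1, one_mul, mul_one]
      · rw [gP_gt (by omega), gM_gt (by omega)]
  · -- y < x : two special sites y and x
    have key : T L (gP L q y) * T L (gM L q x)
        = (q^3 * q⁻¹) • (T L (gM L q x) * T L (gP L q y)) := by
      refine T_qc2 ⟨y, by omega⟩ ⟨x, by omega⟩ (by simp [Fin.ext_iff]; omega) _ _ ?_ ?_ ?_
      · rw [gP_eq' (by simp), gM_lt (by simp [h])]
        exact s_Ek hq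
      · rw [gP_gt (by simp [h]), gM_eq' (by simp)]
        exact s_KiF hq
      · intro s hs hs'
        have hsy : (s:ℕ) ≠ y := fun hh => hs (Fin.ext hh)
        have hsx : (s:ℕ) ≠ x := fun hh => hs' (Fin.ext hh)
        by_cases h1 : (s:ℕ) < y
        · rw [gP_lt h1, one_mul, mul_one]
        · by_cases h2 : (s:ℕ) < x
          · rw [gP_gt (by omega), gM_lt h2]
            exact s_Kik
          · rw [gP_gt (by omega), gM_gt (by omega)]
    have := qc_of_T (aP_eq hq y) (aM_eq (Q := Q) hq x) key
    rw [this]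
    congr 1
    field_simp

-- relation D
lemma relD (hq : q ≠ 0) {y : ℕ} (hy1 : 1 ≤ y) (hyL : y ≤ L) :
    aP L q y * a0 L q Q = (q^2) • (a0 L q Q * aP L q y) := by
  refine qc_of_T (aP_eq hq y) (a0_eq hq) ?_
  refine T_qc1 ⟨y, by omega⟩ _ ?_ ?_
  · rw [gP_eq' (by simp), g0_pos (by simp [Fin.ext_iff]; omega)]
    exact s_EKi hq
  · intro s hs
    have hsy : (s:ℕ) ≠ y := fun hh => hs (Fin.ext hh)
    by_cases h1 : (s:ℕ) < y
    · rw [gP_lt h1, one_mul, mul_one]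
    · rw [gP_gt (by omega), g0_pos (by intro h; subst h; simp at h1; omega)]

-- relation E
lemma relE (hq : q ≠ 0) {x : ℕ} (hx1 : 1 ≤ x) (hxL : x ≤ L) :
    a0 L q Q * aM L q Q x = (q^2) • (aM L q Q x * a0 L q Q) := by
  have key : T L (g0 L q Q) * T L (gM L q x)
      = (q^3 * q⁻¹) • (T L (gM L q x) * T L (g0 L q Q)) := by
    refine T_qc2 0 ⟨x, by omega⟩ (by simp [Fin.ext_iff]; omega) _ _ ?_ ?_ ?_
    · rw [g0_zero, gM_lt (by simp [hx1]; omega)]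
      exact s_fk hq
    · rw [g0_pos (by simp [Fin.ext_iff]; omega), gM_eq' (by simp)]
      exact s_KiF hq
    · intro s hs hs'
      have hs0 : (s:ℕ) ≠ 0 := fun hh => hs (Fin.ext hh)
      have hsx : (s:ℕ) ≠ x := fun hh => hs' (Fin.ext hh)
      rw [g0_pos hs]
      by_cases h2 : (s:ℕ) < x
      · rw [gM_lt h2]; exact s_Kik
      · rw [gM_gt (by omega)]
  have := qc_of_T (a0_eq hq) (aM_eq (Q := Q) hq x) key
  rw [this]
  congr 1
  field_simp

-- zero relations
lemma zPP (hq : q ≠ 0) {y : ℕ} (hyL : y ≤ L) : aP L q y * aP L q y = 0 := by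
  rw [aP_eq hq, smul_mul_assoc, mul_smul_comm]
  rw [T_zero (⟨y, by omega⟩ : Fin (L+1)) (by rw [gP_eq' (by simp)]; exact s_EE)]
  simp

lemma zMM (hq : q ≠ 0) {x : ℕ} (hxL : x ≤ L) : aM L q Q x * aM L q Q x = 0 := by
  rw [aM_eq hq, smul_mul_assoc, mul_smul_comm]
  rw [T_zero (⟨x, by omega⟩ : Fin (L+1)) (by rw [gM_eq' (by simp)]; exact s_FF)]
  simp

lemma z00 (hq : q ≠ 0) : a0 L q Q * a0 L q Q = (0 : Matrix (Conf L) (Conf L) ℝ) := by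
  rw [a0_eq hq, smul_mul_assoc, mul_smul_comm]
  rw [T_zero (0 : Fin (L+1)) (by rw [g0_zero]; exact s_ff)]
  simp

lemma zPM (hq : q ≠ 0) {y : ℕ} (hyL : y ≤ L) : aP L q y * aM L q Q y = 0 := by
  rw [aP_eq hq, aM_eq hq, smul_mul_assoc, mul_smul_comm]
  rw [T_zero (⟨y, by omega⟩ : Fin (L+1))
    (by rw [gP_eq' (by simp), gM_eq' (by simp)]; exact s_EF)]
  simp

lemma zMP (hq : q ≠ 0) {y : ℕ} (hyL : y ≤ L) : aM L q Q y * aP L q y = 0 := by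
  rw [aP_eq hq, aM_eq hq, smul_mul_assoc, mul_smul_comm]
  rw [T_zero (⟨y, by omega⟩ : Fin (L+1))
    (by rw [gM_eq' (by simp), gP_eq' (by simp)]; exact s_FE)]
  simp



end Gen

section ListLemmas
variable {L : ℕ} {q Q : ℝ}
def PA (L : ℕ) (q : ℝ) (l : List ℕ) : Matrix (Conf L) (Conf L) ℝ := (l.map (aP L q)).prod
def MA (L : ℕ) (q Q : ℝ) (l : List ℕ) : Matrix (Conf L) (Conf L) ℝ := (l.map (aM L q Q)).prod

@[simp] lemma PA_nil : PA L q [] = 1 := rfl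
@[simp] lemma MA_nil : MA L q Q [] = 1 := rfl
@[simp] lemma PA_cons {a : ℕ} {l : List ℕ} : PA L q (a :: l) = aP L q a * PA L q l := by
  simp [PA]
@[simp] lemma MA_cons {a : ℕ} {l : List ℕ} : MA L q Q (a :: l) = aM L q Q a * MA L q Q l := by
  simp [MA]

/-- push `aP y` through a list of `aM`s avoiding `y`. -/
lemma aP_push_MA (hq : q ≠ 0) {y : ℕ} (hy1 : 1 ≤ y) (hyL : y ≤ L) {l : List ℕ}
    (hl : ∀ a ∈ l, (1 ≤ a ∧ a ≤ L) ∧ a ≠ y) :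
    aP L q y * MA L q Q l = (q^(2 * l.length)) • (MA L q Q l * aP L q y) := by
  induction l with
  | nil => simp
  | cons a t ih =>
    obtain ⟨⟨ha1, haL⟩, hay⟩ := hl a (by simp)
    have step := relC (Q := Q) hq (Ne.symm hay).symm ha1 haL hyL
    rw [MA_cons, ← mul_assoc, step, smul_mul_assoc, mul_assoc,
      ih (fun b hb => hl b (by simp [hb])), mul_smul_comm, smul_smul, ← mul_assoc]
    congr 1
    rw [List.length_cons]
    ring

/-- push `a0` through a list of `aM`s. -/
lemma a0_push_MA (hq : q ≠ 0) {l : List ℕ} (hl : ∀ a ∈ l, 1 ≤ a ∧ a ≤ L) :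
    a0 L q Q * MA L q Q l = (q^(2 * l.length)) • (MA L q Q l * a0 L q Q) := by
  induction l with
  | nil => simp
  | cons a t ih =>
    obtain ⟨ha1, haL⟩ := hl a (by simp)
    rw [MA_cons, ← mul_assoc, relE hq ha1 haL, smul_mul_assoc, mul_assoc,
      ih (fun b hb => hl b (by simp [hb])), mul_smul_comm, smul_smul, ← mul_assoc]
    congr 1
    rw [List.length_cons]
    ring

/-- `aP y` kills a list of `aM`s containing `y`. -/
lemma aP_MA_zero (hq : q ≠ 0) {y : ℕ} (hyL : y ≤ L) {l : List ℕ} (hy : y ∈ l)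
    (hl : ∀ a ∈ l, 1 ≤ a ∧ a ≤ L) :
    aP L q y * MA L q Q l = 0 := by
  induction l with
  | nil => simp at hy
  | cons a t ih =>
    obtain ⟨ha1, haL⟩ := hl a (by simp)
    by_cases hay : a = y
    · subst hay
      rw [MA_cons, ← mul_assoc, zPM hq haL, zero_mul]
    · have hyt : y ∈ t := by cases List.mem_cons.mp hy with | inl h => omega | inr h => exact h
      rw [MA_cons, ← mul_assoc, relC (Q := Q) hq hay ha1 haL hyL, smul_mul_assoc, mul_assoc,
        ih hyt (fun b hb => hl b (by simp [hb])), mul_zero, smul_zero]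

/-- `aM x` kills a list of `aP`s containing `x`. -/
lemma aM_PA_zero (hq : q ≠ 0) {x : ℕ} (hx1 : 1 ≤ x) (hxL : x ≤ L) {l : List ℕ} (hx : x ∈ l)
    (hl : ∀ a ∈ l, 1 ≤ a ∧ a ≤ L) :
    aM L q Q x * PA L q l = 0 := by
  induction l with
  | nil => simp at hx
  | cons a t ih =>
    obtain ⟨ha1, haL⟩ := hl a (by simp)
    by_cases hax : a = x
    · subst hax
      rw [PA_cons, ← mul_assoc, zMP hq haL, zero_mul]
    · have hxt : x ∈ t := by cases List.mem_cons.mp hx with | inl h => omega | inr h => exact h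
      have := qc_rev (relC (Q := Q) hq (fun h => hax h.symm) hx1 hxL haL) (pow_ne_zero 2 hq)
      rw [PA_cons, ← mul_assoc, this, smul_mul_assoc, mul_assoc,
        ih hxt (fun b hb => hl b (by simp [hb])), mul_zero, smul_zero]

/-- `aM x` q-commutes with a list of `aM`s avoiding `x` (existential scalar). -/
lemma aM_qc_MA (hq : q ≠ 0) {x : ℕ} (hx1 : 1 ≤ x) (hxL : x ≤ L) {l : List ℕ}
    (hl : ∀ a ∈ l, (1 ≤ a ∧ a ≤ L) ∧ a ≠ x) :
    ∃ c : ℝ, aM L q Q x * MA L q Q l = c • (MA L q Q l * aM L q Q x) := by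
  induction l with
  | nil => exact ⟨1, by simp⟩
  | cons a t ih =>
    obtain ⟨⟨ha1, haL⟩, hax⟩ := hl a (by simp)
    obtain ⟨c, hc⟩ := ih (fun b hb => hl b (by simp [hb]))
    rcases lt_or_gt_of_ne hax with h | h
    · -- a < x : use relB with i = a, j = x, reversed
      have := qc_rev (relB (Q := Q) hq h hxL) (pow_ne_zero 2 hq)
      exact ⟨(q^2)⁻¹ * c, by
        rw [MA_cons, ← mul_assoc, this, smul_mul_assoc, mul_assoc, hc, mul_smul_comm,
          smul_smul, ← mul_assoc]⟩
    · -- x < a : relB forward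
      exact ⟨q^2 * c, by
        rw [MA_cons, ← mul_assoc, relB (Q := Q) hq h haL, smul_mul_assoc, mul_assoc, hc,
          mul_smul_comm, smul_smul, ← mul_assoc]⟩

/-- insertion of `aP y` into a sorted ascending list. -/
lemma insPA (hq : q ≠ 0) {y : ℕ} (hy1 : 1 ≤ y) (hyL : y ≤ L) {l : List ℕ}
    (hs : l.Pairwise (· ≤ ·)) (hnm : y ∉ l) (hl : ∀ a ∈ l, 1 ≤ a ∧ a ≤ L) :
    aP L q y * PA L q l
      = (q ^ (2 * l.countP (fun a => a < y))) • PA L q (List.orderedInsert (· ≤ ·) y l) := by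
  induction l with
  | nil => simp [List.orderedInsert]
  | cons a t ih =>
    obtain ⟨ha1, haL⟩ := hl a (by simp)
    have hay : a ≠ y := fun h => hnm (by simp [h])
    rw [List.pairwise_cons] at hs
    by_cases hya : y ≤ a
    · have hcount : (a :: t).countP (fun a => decide (a < y)) = 0 := by
        rw [List.countP_eq_zero]
        intro b hb
        simp only [decide_eq_true_eq, not_lt]
        rcases List.mem_cons.mp hb with h | h
        · omega
        · exact le_trans hya (hs.1 b h)
      rw [List.orderedInsert, if_pos hya, hcount]
      simp
    · have haltY : a < y := by omega
      have hcount : (a :: t).countP (fun a => decide (a < y))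
          = t.countP (fun a => decide (a < y)) + 1 := by
        rw [List.countP_cons]
        simp [haltY]
      rw [List.orderedInsert, if_neg hya, hcount]
      rw [PA_cons, ← mul_assoc, relA hq haltY hyL, smul_mul_assoc, mul_assoc,
        ih hs.2 (fun h => hnm (by simp [h])) (fun b hb => hl b (by simp [hb])),
        mul_smul_comm, smul_smul, PA_cons]
      congr 1
      ring

/-- `aP y` kills a sorted list of `aP`s containing `y`. -/
lemma aP_PA_zero (hq : q ≠ 0) {y : ℕ} (hyL : y ≤ L) {l : List ℕ}
    (hs : l.Pairwise (· ≤ ·)) (hy : y ∈ l) (hl : ∀ a ∈ l, 1 ≤ a ∧ a ≤ L) :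
    aP L q y * PA L q l = 0 := by
  induction l with
  | nil => simp at hy
  | cons a t ih =>
    obtain ⟨ha1, haL⟩ := hl a (by simp)
    rw [List.pairwise_cons] at hs
    by_cases hay : a = y
    · subst hay
      rw [PA_cons, ← mul_assoc, zPP hq haL, zero_mul]
    · have hyt : y ∈ t := by cases List.mem_cons.mp hy with | inl h => omega | inr h => exact h
      have haltY : a < y := lt_of_le_of_ne (hs.1 y hyt) hay
      rw [PA_cons, ← mul_assoc, relA hq haltY hyL, smul_mul_assoc, mul_assoc,
        ih hs.2 hyt (fun b hb => hl b (by simp [hb])), mul_zero, smul_zero]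

/-- insertion of `aM x` into a sorted descending list. -/
lemma insMA (hq : q ≠ 0) {x : ℕ} (hx1 : 1 ≤ x) (hxL : x ≤ L) {l : List ℕ}
    (hs : l.Pairwise (· ≥ ·)) (hnm : x ∉ l) (hl : ∀ a ∈ l, 1 ≤ a ∧ a ≤ L) :
    aM L q Q x * MA L q Q l
      = (q ^ (2 * l.countP (fun a => x < a))) • MA L q Q (List.orderedInsert (· ≥ ·) x l) := by
  induction l with
  | nil => simp [List.orderedInsert]
  | cons a t ih =>
    obtain ⟨ha1, haL⟩ := hl a (by simp)
    have hax : a ≠ x := fun h => hnm (by simp [h])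
    rw [List.pairwise_cons] at hs
    by_cases hxa : x ≥ a
    · have hcount : (a :: t).countP (fun a => decide (x < a)) = 0 := by
        rw [List.countP_eq_zero]
        intro b hb
        simp only [decide_eq_true_eq, not_lt]
        rcases List.mem_cons.mp hb with h | h
        · omega
        · exact le_trans (hs.1 b h) hxa
      rw [List.orderedInsert, if_pos hxa, hcount]
      simp
    · have haltX : x < a := by omega
      have hcount : (a :: t).countP (fun a => decide (x < a))
          = t.countP (fun a => decide (x < a)) + 1 := by
        rw [List.countP_cons]
        simp [haltX]
      rw [List.orderedInsert, if_neg hxa, hcount]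
      rw [MA_cons, ← mul_assoc, relB (Q := Q) hq haltX haL, smul_mul_assoc, mul_assoc,
        ih hs.2 (fun h => hnm (by simp [h])) (fun b hb => hl b (by simp [hb])),
        mul_smul_comm, smul_smul, MA_cons]
      congr 1
      ring

/-- `aM x` kills a sorted descending list of `aM`s containing `x`. -/
lemma aM_MA_zero (hq : q ≠ 0) {x : ℕ} (hxL : x ≤ L) {l : List ℕ}
    (hs : l.Pairwise (· ≥ ·)) (hx : x ∈ l) (hl : ∀ a ∈ l, 1 ≤ a ∧ a ≤ L) :
    aM L q Q x * MA L q Q l = 0 := by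
  induction l with
  | nil => simp at hx
  | cons a t ih =>
    obtain ⟨ha1, haL⟩ := hl a (by simp)
    rw [List.pairwise_cons] at hs
    by_cases hax : a = x
    · subst hax
      rw [MA_cons, ← mul_assoc, zMM hq haL, zero_mul]
    · have hxt : x ∈ t := by cases List.mem_cons.mp hx with | inl h => omega | inr h => exact h
      have hxltA : x < a := lt_of_le_of_ne (hs.1 x hxt) (fun h => hax h.symm)
      rw [MA_cons, ← mul_assoc, relB (Q := Q) hq hxltA haL, smul_mul_assoc, mul_assoc,
        ih hs.2 hxt (fun b hb => hl b (by simp [hb])), mul_zero, smul_zero]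


end ListLemmas


section FinsetLemmas
variable {L : ℕ} {q Q : ℝ}

lemma prodAM_eq (X : Finset ℕ) : prodAM L q Q X = MA L q Q ((X.sort (· ≤ ·)).reverse) := rfl
lemma prodAP_eq (Y : Finset ℕ) : prodAP L q Y = PA L q (Y.sort (· ≤ ·)) := rfl

lemma rev_sorted (X : Finset ℕ) : ((X.sort (· ≤ ·)).reverse).Pairwise (· ≥ ·) := by
  rw [List.pairwise_reverse]
  exact Finset.pairwise_sort X (· ≤ ·)

lemma mem_revsort {a : ℕ} {X : Finset ℕ} : a ∈ (X.sort (· ≤ ·)).reverse ↔ a ∈ X := by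
  simp

lemma sort_bounds {X : Finset ℕ} (hX : X ⊆ Finset.Icc 1 L) :
    ∀ a ∈ X.sort (· ≤ ·), 1 ≤ a ∧ a ≤ L := fun a ha => by
  simpa using Finset.mem_Icc.mp (hX ((Finset.mem_sort _).mp ha))

lemma revsort_bounds {X : Finset ℕ} (hX : X ⊆ Finset.Icc 1 L) :
    ∀ a ∈ (X.sort (· ≤ ·)).reverse, 1 ≤ a ∧ a ≤ L := fun a ha =>
  sort_bounds hX a (List.mem_reverse.mp ha)

lemma len_revsort {X : Finset ℕ} : ((X.sort (· ≤ ·)).reverse).length = X.card := by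
  simp

lemma sort_insert_asc {y : ℕ} {Y : Finset ℕ} (h : y ∉ Y) :
    (insert y Y).sort (· ≤ ·) = List.orderedInsert (· ≤ ·) y (Y.sort (· ≤ ·)) := by
  refine List.Perm.eq_of_pairwise' (Finset.pairwise_sort _ _)
    (List.Pairwise.orderedInsert y _ (Finset.pairwise_sort _ _)) ?_
  have p1 := Finset.sort_perm_toList (insert y Y) (· ≤ ·)
  have p2 := Finset.toList_insert h
  have p3 := List.Perm.cons y (Finset.sort_perm_toList Y (· ≤ ·)).symm
  have p4 := (List.perm_orderedInsert (· ≤ ·) y (Y.sort (· ≤ ·))).symm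
  exact ((p1.trans p2).trans p3).trans p4

lemma sort_insert_desc {x : ℕ} {X : Finset ℕ} (h : x ∉ X) :
    ((insert x X).sort (· ≤ ·)).reverse
      = List.orderedInsert (· ≥ ·) x ((X.sort (· ≤ ·)).reverse) := by
  refine List.Perm.eq_of_pairwise' (rev_sorted _)
    (List.Pairwise.orderedInsert x _ (rev_sorted _)) ?_
  have p0 := List.reverse_perm ((insert x X).sort (· ≤ ·))
  have p1 := Finset.sort_perm_toList (insert x X) (· ≤ ·)
  have p2 := Finset.toList_insert h
  have p3 := List.Perm.cons x (Finset.sort_perm_toList X (· ≤ ·)).symm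
  have p3' := List.Perm.cons x (List.reverse_perm (X.sort (· ≤ ·))).symm
  have p4 := (List.perm_orderedInsert (· ≥ ·) x ((X.sort (· ≤ ·)).reverse)).symm
  exact ((((p0.trans p1).trans p2).trans p3).trans p3').trans p4

lemma countP_sort (Y : Finset ℕ) (p : ℕ → Prop) [DecidablePred p] :
    (Y.sort (· ≤ ·)).countP (fun a => decide (p a)) = (Y.filter p).card := by
  rw [(Finset.sort_perm_toList Y (· ≤ ·)).countP_eq]
  rw [← Multiset.coe_countP, Finset.coe_toList, Multiset.countP_eq_card_filter]
  rfl

lemma countP_revsort (X : Finset ℕ) (p : ℕ → Prop) [DecidablePred p] :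
    ((X.sort (· ≤ ·)).reverse).countP (fun a => decide (p a)) = (X.filter p).card := by
  rw [(List.reverse_perm (X.sort (· ≤ ·))).countP_eq]
  exact countP_sort X p

-- ## Action of the generators on normally ordered products

lemma G0a (hq : q ≠ 0) {X : Finset ℕ} (hX : X ⊆ Finset.Icc 1 L) (Y : Finset ℕ) :
    a0 L q Q * (prodAM L q Q X * prodAP L q Y)
      = (q ^ (2 * X.card)) • (prodAM L q Q X * a0 L q Q * prodAP L q Y) := by
  rw [prodAM_eq, prodAP_eq, ← mul_assoc, a0_push_MA hq (revsort_bounds hX),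
    smul_mul_assoc, len_revsort]

lemma G0b (hq : q ≠ 0) {X : Finset ℕ} (hX : X ⊆ Finset.Icc 1 L) (Y : Finset ℕ) :
    a0 L q Q * (prodAM L q Q X * a0 L q Q * prodAP L q Y) = 0 := by
  rw [prodAM_eq, prodAP_eq, ← mul_assoc, ← mul_assoc,
    a0_push_MA hq (revsort_bounds hX), smul_mul_assoc, smul_mul_assoc, mul_assoc,
    mul_assoc, ← mul_assoc (a0 L q Q), z00 hq, zero_mul, mul_zero, smul_zero]

lemma GPX0 (hq : q ≠ 0) {X : Finset ℕ} (hX : X ⊆ Finset.Icc 1 L) {y : ℕ} (hy : y ∈ X)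
    (Y : Finset ℕ) :
    aP L q y * (prodAM L q Q X * prodAP L q Y) = 0 := by
  rw [prodAM_eq, ← mul_assoc,
    aP_MA_zero hq ((Finset.mem_Icc.mp (hX hy)).2) (mem_revsort.mpr hy) (revsort_bounds hX),
    zero_mul]

lemma GPX1 (hq : q ≠ 0) {X : Finset ℕ} (hX : X ⊆ Finset.Icc 1 L) {y : ℕ} (hy : y ∈ X)
    (Y : Finset ℕ) :
    aP L q y * (prodAM L q Q X * a0 L q Q * prodAP L q Y) = 0 := by
  rw [prodAM_eq, ← mul_assoc, ← mul_assoc,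
    aP_MA_zero hq ((Finset.mem_Icc.mp (hX hy)).2) (mem_revsort.mpr hy) (revsort_bounds hX),
    zero_mul, zero_mul]

lemma GPY0 (hq : q ≠ 0) {X Y : Finset ℕ} (hX : X ⊆ Finset.Icc 1 L) (hY : Y ⊆ Finset.Icc 1 L)
    {y : ℕ} (hyY : y ∈ Y) (hyX : y ∉ X) :
    aP L q y * (prodAM L q Q X * prodAP L q Y) = 0 := by
  obtain ⟨hy1, hyL⟩ := Finset.mem_Icc.mp (hY hyY)
  rw [prodAM_eq, prodAP_eq, ← mul_assoc,
    aP_push_MA hq hy1 hyL (fun a ha => ⟨revsort_bounds hX a ha, fun h => hyX (by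
      rw [← h]; exact mem_revsort.mp ha)⟩),
    smul_mul_assoc, mul_assoc,
    aP_PA_zero hq hyL (Finset.pairwise_sort _ _) ((Finset.mem_sort _).mpr hyY) (sort_bounds hY),
    mul_zero, smul_zero]

lemma GPY1 (hq : q ≠ 0) {X Y : Finset ℕ} (hX : X ⊆ Finset.Icc 1 L) (hY : Y ⊆ Finset.Icc 1 L)
    {y : ℕ} (hyY : y ∈ Y) (hyX : y ∉ X) :
    aP L q y * (prodAM L q Q X * a0 L q Q * prodAP L q Y) = 0 := by
  obtain ⟨hy1, hyL⟩ := Finset.mem_Icc.mp (hY hyY)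
  rw [prodAM_eq, prodAP_eq, ← mul_assoc, ← mul_assoc,
    aP_push_MA hq hy1 hyL (fun a ha => ⟨revsort_bounds hX a ha, fun h => hyX (by
      rw [← h]; exact mem_revsort.mp ha)⟩),
    smul_mul_assoc, smul_mul_assoc, mul_assoc, mul_assoc, ← mul_assoc (aP L q y),
    relD (Q := Q) hq hy1 hyL, smul_mul_assoc, mul_assoc,
    aP_PA_zero hq hyL (Finset.pairwise_sort _ _) ((Finset.mem_sort _).mpr hyY) (sort_bounds hY),
    mul_zero, smul_zero, mul_zero, smul_zero]

lemma GPins0 (hq : q ≠ 0) {X Y : Finset ℕ} (hX : X ⊆ Finset.Icc 1 L)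
    (hY : Y ⊆ Finset.Icc 1 L) {y : ℕ} (hy : y ∈ Finset.Icc 1 L) (hyX : y ∉ X) (hyY : y ∉ Y) :
    aP L q y * (prodAM L q Q X * prodAP L q Y)
      = (q ^ (2 * (X.card + (Y.filter (· < y)).card)))
          • (prodAM L q Q X * prodAP L q (insert y Y)) := by
  obtain ⟨hy1, hyL⟩ := Finset.mem_Icc.mp hy
  rw [prodAM_eq, prodAP_eq, ← mul_assoc,
    aP_push_MA hq hy1 hyL (fun a ha => ⟨revsort_bounds hX a ha, fun h => hyX (by
      rw [← h]; exact mem_revsort.mp ha)⟩),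
    smul_mul_assoc, mul_assoc,
    insPA hq hy1 hyL (Finset.pairwise_sort _ _) (fun h => hyY ((Finset.mem_sort _).mp h))
      (sort_bounds hY),
    mul_smul_comm, smul_smul, prodAP_eq, sort_insert_asc hyY, len_revsort,
    countP_sort Y (· < y), ← pow_add]
  congr 2
  ring

lemma GPins1 (hq : q ≠ 0) {X Y : Finset ℕ} (hX : X ⊆ Finset.Icc 1 L)
    (hY : Y ⊆ Finset.Icc 1 L) {y : ℕ} (hy : y ∈ Finset.Icc 1 L) (hyX : y ∉ X) (hyY : y ∉ Y) :
    aP L q y * (prodAM L q Q X * a0 L q Q * prodAP L q Y)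
      = (q ^ (2 * (X.card + 1 + (Y.filter (· < y)).card)))
          • (prodAM L q Q X * a0 L q Q * prodAP L q (insert y Y)) := by
  obtain ⟨hy1, hyL⟩ := Finset.mem_Icc.mp hy
  rw [prodAM_eq, prodAP_eq, ← mul_assoc, ← mul_assoc,
    aP_push_MA hq hy1 hyL (fun a ha => ⟨revsort_bounds hX a ha, fun h => hyX (by
      rw [← h]; exact mem_revsort.mp ha)⟩),
    smul_mul_assoc, smul_mul_assoc, mul_assoc, mul_assoc, ← mul_assoc (aP L q y),
    relD (Q := Q) hq hy1 hyL, smul_mul_assoc, mul_assoc,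
    insPA hq hy1 hyL (Finset.pairwise_sort _ _) (fun h => hyY ((Finset.mem_sort _).mp h))
      (sort_bounds hY),
    mul_smul_comm, smul_smul, ← mul_assoc, prodAP_eq (insert y Y), sort_insert_asc hyY,
    ← pow_add, mul_smul_comm, smul_smul, ← pow_add]
  congr 1
  rw [len_revsort, countP_sort Y (· < y)]
  congr 1
  omega

lemma GMX0 (hq : q ≠ 0) {X : Finset ℕ} (hX : X ⊆ Finset.Icc 1 L) {x : ℕ} (hx : x ∈ X)
    (Y : Finset ℕ) :
    aM L q Q x * (prodAM L q Q X * prodAP L q Y) = 0 := by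
  rw [prodAM_eq, ← mul_assoc,
    aM_MA_zero hq ((Finset.mem_Icc.mp (hX hx)).2) (rev_sorted X) (mem_revsort.mpr hx)
      (revsort_bounds hX),
    zero_mul]

lemma GMX1 (hq : q ≠ 0) {X : Finset ℕ} (hX : X ⊆ Finset.Icc 1 L) {x : ℕ} (hx : x ∈ X)
    (Y : Finset ℕ) :
    aM L q Q x * (prodAM L q Q X * a0 L q Q * prodAP L q Y) = 0 := by
  rw [prodAM_eq, ← mul_assoc, ← mul_assoc,
    aM_MA_zero hq ((Finset.mem_Icc.mp (hX hx)).2) (rev_sorted X) (mem_revsort.mpr hx)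
      (revsort_bounds hX),
    zero_mul, zero_mul]

lemma GMY0 (hq : q ≠ 0) {X Y : Finset ℕ} (hX : X ⊆ Finset.Icc 1 L) (hY : Y ⊆ Finset.Icc 1 L)
    {x : ℕ} (hxY : x ∈ Y) (hxX : x ∉ X) :
    aM L q Q x * (prodAM L q Q X * prodAP L q Y) = 0 := by
  obtain ⟨hx1, hxL⟩ := Finset.mem_Icc.mp (hY hxY)
  obtain ⟨c, hc⟩ := aM_qc_MA (Q := Q) hq hx1 hxL
    (l := (X.sort (· ≤ ·)).reverse) (fun a ha => ⟨revsort_bounds hX a ha, fun h => hxX (by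
      rw [← h]; exact mem_revsort.mp ha)⟩)
  rw [prodAM_eq, prodAP_eq, ← mul_assoc, hc, smul_mul_assoc, mul_assoc,
    aM_PA_zero hq hx1 hxL ((Finset.mem_sort _).mpr hxY) (sort_bounds hY),
    mul_zero, smul_zero]

lemma GMY1 (hq : q ≠ 0) {X Y : Finset ℕ} (hX : X ⊆ Finset.Icc 1 L) (hY : Y ⊆ Finset.Icc 1 L)
    {x : ℕ} (hxY : x ∈ Y) (hxX : x ∉ X) :
    aM L q Q x * (prodAM L q Q X * a0 L q Q * prodAP L q Y) = 0 := by
  obtain ⟨hx1, hxL⟩ := Finset.mem_Icc.mp (hY hxY)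
  obtain ⟨c, hc⟩ := aM_qc_MA (Q := Q) hq hx1 hxL
    (l := (X.sort (· ≤ ·)).reverse) (fun a ha => ⟨revsort_bounds hX a ha, fun h => hxX (by
      rw [← h]; exact mem_revsort.mp ha)⟩)
  have hrev : aM L q Q x * a0 L q Q = (q^2)⁻¹ • (a0 L q Q * aM L q Q x) :=
    qc_rev (relE hq hx1 hxL) (pow_ne_zero 2 hq)
  rw [prodAM_eq, prodAP_eq, ← mul_assoc, ← mul_assoc, hc, smul_mul_assoc, smul_mul_assoc,
    mul_assoc, mul_assoc, ← mul_assoc (aM L q Q x), hrev, smul_mul_assoc, mul_assoc,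
    aM_PA_zero hq hx1 hxL ((Finset.mem_sort _).mpr hxY) (sort_bounds hY),
    mul_zero, smul_zero, mul_zero, smul_zero]

lemma GMins0 (hq : q ≠ 0) {X Y : Finset ℕ} (hX : X ⊆ Finset.Icc 1 L)
    (hY : Y ⊆ Finset.Icc 1 L) {x : ℕ} (hx : x ∈ Finset.Icc 1 L) (hxX : x ∉ X) (hxY : x ∉ Y) :
    aM L q Q x * (prodAM L q Q X * prodAP L q Y)
      = (q ^ (2 * (X.filter (fun a => x < a)).card))
          • (prodAM L q Q (insert x X) * prodAP L q Y) := by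
  obtain ⟨hx1, hxL⟩ := Finset.mem_Icc.mp hx
  rw [prodAM_eq, prodAP_eq, ← mul_assoc,
    insMA hq hx1 hxL (rev_sorted X) (fun h => hxX (mem_revsort.mp h)) (revsort_bounds hX),
    smul_mul_assoc, prodAM_eq, sort_insert_desc hxX, countP_revsort X (fun a => x < a)]

lemma GMins1 (hq : q ≠ 0) {X Y : Finset ℕ} (hX : X ⊆ Finset.Icc 1 L)
    (hY : Y ⊆ Finset.Icc 1 L) {x : ℕ} (hx : x ∈ Finset.Icc 1 L) (hxX : x ∉ X) (hxY : x ∉ Y) :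
    aM L q Q x * (prodAM L q Q X * a0 L q Q * prodAP L q Y)
      = (q ^ (2 * (X.filter (fun a => x < a)).card))
          • (prodAM L q Q (insert x X) * a0 L q Q * prodAP L q Y) := by
  obtain ⟨hx1, hxL⟩ := Finset.mem_Icc.mp hx
  rw [prodAM_eq, prodAP_eq, ← mul_assoc, ← mul_assoc,
    insMA hq hx1 hxL (rev_sorted X) (fun h => hxX (mem_revsort.mp h)) (revsort_bounds hX),
    smul_mul_assoc, smul_mul_assoc, prodAM_eq, sort_insert_desc hxX,
    countP_revsort X (fun a => x < a)]

end FinsetLemmas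

section Comb
variable {M : Type*} [AddCommMonoid M] {L : ℕ}

/-- The index set: pairs of disjoint subsets of `Icc 1 L`. -/
def DD (L : ℕ) : Finset (Finset ℕ × Finset ℕ) :=
  ((Finset.Icc 1 L).powerset ×ˢ (Finset.Icc 1 L).powerset).filter fun p => Disjoint p.1 p.2

def Dfil (L m : ℕ) : Finset (Finset ℕ × Finset ℕ) :=
  (DD L).filter fun p => p.1.card + p.2.card = m

lemma mem_Dfil {p : Finset ℕ × Finset ℕ} {m : ℕ} :
    p ∈ Dfil L m ↔ p.1 ⊆ Finset.Icc 1 L ∧ p.2 ⊆ Finset.Icc 1 L ∧ Disjoint p.1 p.2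
      ∧ p.1.card + p.2.card = m := by
  simp [Dfil, DD, Finset.mem_filter, Finset.mem_product, and_assoc]

/-- Reindexing: inserting a new element into the second component. -/
lemma sum_insertY (m : ℕ) (H : Finset ℕ × Finset ℕ → ℕ → M) :
    ∑ p ∈ Dfil L m, ∑ y ∈ (Finset.Icc 1 L).filter (fun y => y ∉ p.1 ∧ y ∉ p.2),
        H (p.1, insert y p.2) y
      = ∑ p ∈ Dfil L (m+1), ∑ y ∈ p.2, H p y := by
  rw [Finset.sum_sigma' (Dfil L m)
      (fun p => (Finset.Icc 1 L).filter (fun y => y ∉ p.1 ∧ y ∉ p.2))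
      (fun p y => H (p.1, insert y p.2) y),
    Finset.sum_sigma' (Dfil L (m+1)) (fun p => p.2) (fun p y => H p y)]
  refine Finset.sum_bij' (fun z _ => ⟨(z.1.1, insert z.2 z.1.2), z.2⟩)
    (fun w _ => ⟨(w.1.1, w.1.2.erase w.2), w.2⟩) ?_ ?_ ?_ ?_ ?_
  · rintro ⟨⟨X, Y⟩, y⟩ hz
    simp only [Finset.mem_sigma, mem_Dfil, Finset.mem_filter] at hz ⊢
    obtain ⟨⟨hX, hY, hdisj, hcard⟩, hyIcc, hyX, hyY⟩ := hz
    refine ⟨⟨hX, Finset.insert_subset hyIcc hY, ?_, ?_⟩, Finset.mem_insert_self _ _⟩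
    · rw [Finset.disjoint_insert_right]
      exact ⟨hyX, hdisj⟩
    · rw [Finset.card_insert_of_notMem hyY]
      omega
  · rintro ⟨⟨X, Y⟩, y⟩ hw
    simp only [Finset.mem_sigma, mem_Dfil, Finset.mem_filter] at hw ⊢
    obtain ⟨⟨hX, hY, hdisj, hcard⟩, hyY⟩ := hw
    have hy1 : y ∈ Finset.Icc 1 L := hY hyY
    have hcY : 1 ≤ Y.card := Finset.card_pos.mpr ⟨y, hyY⟩
    refine ⟨⟨hX, fun a ha => hY (Finset.mem_of_mem_erase ha), ?_, ?_⟩,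
      hy1, ?_, Finset.notMem_erase _ _⟩
    · exact hdisj.mono_right (Finset.erase_subset _ _)
    · rw [Finset.card_erase_of_mem hyY]
      omega
    · exact fun h => (Finset.disjoint_left.mp hdisj h) hyY
  · rintro ⟨⟨X, Y⟩, y⟩ hz
    simp only [Finset.mem_sigma, mem_Dfil, Finset.mem_filter] at hz
    obtain ⟨-, -, -, hyY⟩ := hz
    simp [Finset.erase_insert hyY]
  · rintro ⟨⟨X, Y⟩, y⟩ hw
    simp only [Finset.mem_sigma, mem_Dfil, Finset.mem_filter] at hw
    obtain ⟨-, hyY⟩ := hw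
    simp [Finset.insert_erase hyY]
  · rintro ⟨⟨X, Y⟩, y⟩ hz
    simp

/-- Reindexing: inserting a new element into the first component. -/
lemma sum_insertX (m : ℕ) (H : Finset ℕ × Finset ℕ → ℕ → M) :
    ∑ p ∈ Dfil L m, ∑ x ∈ (Finset.Icc 1 L).filter (fun x => x ∉ p.1 ∧ x ∉ p.2),
        H (insert x p.1, p.2) x
      = ∑ p ∈ Dfil L (m+1), ∑ x ∈ p.1, H p x := by
  rw [Finset.sum_sigma' (Dfil L m)
      (fun p => (Finset.Icc 1 L).filter (fun x => x ∉ p.1 ∧ x ∉ p.2))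
      (fun p x => H (insert x p.1, p.2) x),
    Finset.sum_sigma' (Dfil L (m+1)) (fun p => p.1) (fun p x => H p x)]
  refine Finset.sum_bij' (fun z _ => ⟨(insert z.2 z.1.1, z.1.2), z.2⟩)
    (fun w _ => ⟨(w.1.1.erase w.2, w.1.2), w.2⟩) ?_ ?_ ?_ ?_ ?_
  · rintro ⟨⟨X, Y⟩, x⟩ hz
    simp only [Finset.mem_sigma, mem_Dfil, Finset.mem_filter] at hz ⊢
    obtain ⟨⟨hX, hY, hdisj, hcard⟩, hxIcc, hxX, hxY⟩ := hz
    refine ⟨⟨Finset.insert_subset hxIcc hX, hY, ?_, ?_⟩, Finset.mem_insert_self _ _⟩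
    · rw [Finset.disjoint_insert_left]
      exact ⟨hxY, hdisj⟩
    · rw [Finset.card_insert_of_notMem hxX]
      omega
  · rintro ⟨⟨X, Y⟩, x⟩ hw
    simp only [Finset.mem_sigma, mem_Dfil, Finset.mem_filter] at hw ⊢
    obtain ⟨⟨hX, hY, hdisj, hcard⟩, hxX⟩ := hw
    have hx1 : x ∈ Finset.Icc 1 L := hX hxX
    have hcX : 1 ≤ X.card := Finset.card_pos.mpr ⟨x, hxX⟩
    refine ⟨⟨fun a ha => hX (Finset.mem_of_mem_erase ha), hY, ?_, ?_⟩,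
      hx1, Finset.notMem_erase _ _, ?_⟩
    · exact hdisj.mono_left (Finset.erase_subset _ _)
    · rw [Finset.card_erase_of_mem hxX]
      omega
    · exact fun h => (Finset.disjoint_right.mp hdisj h) hxX
  · rintro ⟨⟨X, Y⟩, x⟩ hz
    simp only [Finset.mem_sigma, mem_Dfil, Finset.mem_filter] at hz
    obtain ⟨-, -, hxX, -⟩ := hz
    simp [Finset.erase_insert hxX]
  · rintro ⟨⟨X, Y⟩, x⟩ hw
    simp only [Finset.mem_sigma, mem_Dfil, Finset.mem_filter] at hw
    obtain ⟨-, hxX⟩ := hw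
    simp [Finset.insert_erase hxX]
  · rintro ⟨⟨X, Y⟩, x⟩ hz
    simp

end Comb

section Rank
variable {q : ℝ}

lemma rankX : ∀ (n : ℕ) (X : Finset ℕ), X.card = n →
    ∑ x ∈ X, q ^ (2 * (X.filter fun a => x < a).card) = ∑ i ∈ Finset.range n, q ^ (2 * i) := by
  intro n
  induction n with
  | zero =>
    intro X hX
    rw [Finset.card_eq_zero.mp hX]
    simp
  | succ n ih =>
    intro X hX
    have hne : X.Nonempty := Finset.card_pos.mp (by omega)
    set m := X.min' hne with hm
    have hmX : m ∈ X := X.min'_mem hne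
    have hfm : X.filter (fun a => m < a) = X.erase m := by
      ext a
      simp only [Finset.mem_filter, Finset.mem_erase]
      constructor
      · rintro ⟨ha, hlt⟩; exact ⟨by omega, ha⟩
      · rintro ⟨hne', ha⟩
        exact ⟨ha, lt_of_le_of_ne (X.min'_le a ha) (Ne.symm hne')⟩
    have hcard : (X.erase m).card = n := by
      rw [Finset.card_erase_of_mem hmX]; omega
    rw [← Finset.add_sum_erase X _ hmX, hfm, hcard]
    have hsub : ∀ x ∈ X.erase m, (X.filter fun a => x < a) = ((X.erase m).filter fun a => x < a) := by
      intro x hx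
      rw [Finset.filter_erase, Finset.erase_eq_of_notMem]
      simp only [Finset.mem_filter, not_and, not_lt]
      intro _
      exact X.min'_le x (Finset.mem_of_mem_erase hx)
    rw [Finset.sum_congr rfl (fun x hx => by rw [hsub x hx]), ih (X.erase m) hcard,
      Finset.sum_range_succ, add_comm]

lemma rankY : ∀ (n : ℕ) (Y : Finset ℕ), Y.card = n →
    ∑ y ∈ Y, q ^ (2 * (Y.filter fun a => a < y).card) = ∑ i ∈ Finset.range n, q ^ (2 * i) := by
  intro n
  induction n with
  | zero =>
    intro Y hY
    rw [Finset.card_eq_zero.mp hY]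
    simp
  | succ n ih =>
    intro Y hY
    have hne : Y.Nonempty := Finset.card_pos.mp (by omega)
    set m := Y.max' hne with hm
    have hmY : m ∈ Y := Y.max'_mem hne
    have hfm : Y.filter (fun a => a < m) = Y.erase m := by
      ext a
      simp only [Finset.mem_filter, Finset.mem_erase]
      constructor
      · rintro ⟨ha, hlt⟩; exact ⟨by omega, ha⟩
      · rintro ⟨hne', ha⟩
        exact ⟨ha, lt_of_le_of_ne (Y.le_max' a ha) hne'⟩
    have hcard : (Y.erase m).card = n := by
      rw [Finset.card_erase_of_mem hmY]; omega
    rw [← Finset.add_sum_erase Y _ hmY, hfm, hcard]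
    have hsub : ∀ y ∈ Y.erase m, (Y.filter fun a => a < y) = ((Y.erase m).filter fun a => a < y) := by
      intro y hy
      rw [Finset.filter_erase, Finset.erase_eq_of_notMem]
      simp only [Finset.mem_filter, not_and, not_lt]
      intro _
      exact Y.le_max' y (Finset.mem_of_mem_erase hy)
    rw [Finset.sum_congr rfl (fun y hy => by rw [hsub y hy]), ih (Y.erase m) hcard,
      Finset.sum_range_succ, add_comm]

lemma geom_merge (a b : ℕ) :
    (∑ i ∈ Finset.range a, q ^ (2 * i)) + q ^ (2 * a) * ∑ i ∈ Finset.range b, q ^ (2 * i)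
      = ∑ i ∈ Finset.range (a + b), q ^ (2 * i) := by
  rw [Finset.sum_range_add, Finset.mul_sum]
  congr 1
  refine Finset.sum_congr rfl fun i _ => ?_
  rw [← pow_add]
  congr 1
  ring

lemma geom_succ (b : ℕ) :
    (1 : ℝ) + q ^ 2 * ∑ i ∈ Finset.range b, q ^ (2 * i) = ∑ i ∈ Finset.range (b + 1), q ^ (2 * i) := by
  have h : ∀ i, q ^ (2 * (i + 1)) = q ^ 2 * q ^ (2 * i) := by
    intro i
    rw [← pow_add]
    congr 1
    ring
  rw [Finset.sum_range_succ']
  simp only [h, ← Finset.mul_sum]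
  norm_num
  ring

end Rank

section Final
variable (L : ℕ) (q Q : ℝ)

def N0m (p : Finset ℕ × Finset ℕ) : Matrix (Conf L) (Conf L) ℝ :=
  prodAM L q Q p.1 * prodAP L q p.2
def N1m (p : Finset ℕ × Finset ℕ) : Matrix (Conf L) (Conf L) ℝ :=
  prodAM L q Q p.1 * a0 L q Q * prodAP L q p.2
def T0m (m : ℕ) : Matrix (Conf L) (Conf L) ℝ := ∑ p ∈ Dfil L m, N0m L q Q p
def T1m (m : ℕ) : Matrix (Conf L) (Conf L) ℝ := ∑ p ∈ Dfil L m, N1m L q Q p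
def Mm (d : ℕ) : Matrix (Conf L) (Conf L) ℝ :=
  ∑ p ∈ DD L, ((if p.1.card + p.2.card = d then (1:ℝ) else 0) • N0m L q Q p
    + (if p.1.card + p.2.card + 1 = d then (1:ℝ) else 0) • N1m L q Q p)

lemma Mm_split (d : ℕ) :
    Mm L q Q d = (∑ p ∈ (DD L).filter (fun p => p.1.card + p.2.card = d), N0m L q Q p)
      + ∑ p ∈ (DD L).filter (fun p => p.1.card + p.2.card + 1 = d), N1m L q Q p := by
  rw [Mm, Finset.sum_add_distrib]
  congr 1 <;>
    simp only [ite_smul, one_smul, zero_smul, Finset.sum_filter]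

lemma Mm_zero : Mm L q Q 0 = T0m L q Q 0 := by
  rw [Mm_split, T0m]
  have h : (DD L).filter (fun p => p.1.card + p.2.card + 1 = 0) = ∅ := by
    apply Finset.filter_false_of_mem
    intro p _
    omega
  rw [h, Finset.sum_empty, add_zero]
  rfl

lemma Mm_succ (d : ℕ) : Mm L q Q (d+1) = T0m L q Q (d+1) + T1m L q Q d := by
  rw [Mm_split, T0m, T1m, Dfil, Dfil]
  congr 2
  apply Finset.filter_congr
  intro p _
  constructor <;> (intro h; omega)

variable {L q Q}

lemma E1 (hq : q ≠ 0) (m : ℕ) :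
    a0 L q Q * T0m L q Q m
      = ∑ p ∈ Dfil L m, (q ^ (2 * p.1.card)) • N1m L q Q p := by
  rw [T0m, Finset.mul_sum]
  refine Finset.sum_congr rfl fun p hp => ?_
  obtain ⟨hX, hY, hdisj, hcard⟩ := mem_Dfil.mp hp
  simp only [N0m, N1m]
  exact G0a hq hX p.2

lemma E2 (hq : q ≠ 0) (m : ℕ) : a0 L q Q * T1m L q Q m = 0 := by
  rw [T1m, Finset.mul_sum]
  refine Finset.sum_eq_zero fun p hp => ?_
  obtain ⟨hX, hY, hdisj, hcard⟩ := mem_Dfil.mp hp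
  simp only [N1m]
  exact G0b hq hX p.2

lemma E3 (hq : q ≠ 0) (m : ℕ) :
    ∑ y ∈ Finset.Icc 1 L, aP L q y * T0m L q Q m
      = ∑ p ∈ Dfil L (m+1), ∑ y ∈ p.2,
          (q ^ (2 * (p.1.card + (p.2.filter fun a => a < y).card))) • N0m L q Q p := by
  have step1 : ∀ y, aP L q y * T0m L q Q m = ∑ p ∈ Dfil L m, aP L q y * N0m L q Q p :=
    fun y => by rw [T0m, Finset.mul_sum]
  simp only [step1]
  rw [Finset.sum_comm,
    ← sum_insertY m (fun p y =>
        (q ^ (2 * (p.1.card + (p.2.filter fun a => a < y).card))) • N0m L q Q p)]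
  refine Finset.sum_congr rfl fun p hp => ?_
  obtain ⟨hX, hY, hdisj, hcard⟩ := mem_Dfil.mp hp
  have hvan : ∀ y ∈ Finset.Icc 1 L, aP L q y * N0m L q Q p ≠ 0 → (y ∉ p.1 ∧ y ∉ p.2) := by
    intro y hy hne
    constructor
    · intro hyX
      exact hne (GPX0 hq hX hyX p.2)
    · intro hyY
      exact hne (GPY0 hq hX hY hyY (Finset.disjoint_right.mp hdisj hyY))
  rw [← Finset.sum_filter_of_ne hvan]
  refine Finset.sum_congr rfl fun y hy => ?_
  obtain ⟨hyI, hyX, hyY⟩ := Finset.mem_filter.mp hy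
  simp only [N0m]
  rw [GPins0 hq hX hY hyI hyX hyY]
  congr 2
  rw [Finset.filter_insert, if_neg (lt_irrefl y)]

lemma E4 (hq : q ≠ 0) (m : ℕ) :
    ∑ y ∈ Finset.Icc 1 L, aP L q y * T1m L q Q m
      = ∑ p ∈ Dfil L (m+1), ∑ y ∈ p.2,
          (q ^ (2 * (p.1.card + 1 + (p.2.filter fun a => a < y).card))) • N1m L q Q p := by
  have step1 : ∀ y, aP L q y * T1m L q Q m = ∑ p ∈ Dfil L m, aP L q y * N1m L q Q p :=
    fun y => by rw [T1m, Finset.mul_sum]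
  simp only [step1]
  rw [Finset.sum_comm,
    ← sum_insertY m (fun p y =>
        (q ^ (2 * (p.1.card + 1 + (p.2.filter fun a => a < y).card))) • N1m L q Q p)]
  refine Finset.sum_congr rfl fun p hp => ?_
  obtain ⟨hX, hY, hdisj, hcard⟩ := mem_Dfil.mp hp
  have hvan : ∀ y ∈ Finset.Icc 1 L, aP L q y * N1m L q Q p ≠ 0 → (y ∉ p.1 ∧ y ∉ p.2) := by
    intro y hy hne
    constructor
    · intro hyX
      exact hne (GPX1 hq hX hyX p.2)
    · intro hyY
      exact hne (GPY1 hq hX hY hyY (Finset.disjoint_right.mp hdisj hyY))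
  rw [← Finset.sum_filter_of_ne hvan]
  refine Finset.sum_congr rfl fun y hy => ?_
  obtain ⟨hyI, hyX, hyY⟩ := Finset.mem_filter.mp hy
  simp only [N1m]
  rw [GPins1 hq hX hY hyI hyX hyY]
  congr 2
  rw [Finset.filter_insert, if_neg (lt_irrefl y)]

lemma E5 (hq : q ≠ 0) (m : ℕ) :
    ∑ x ∈ Finset.Icc 1 L, aM L q Q x * T0m L q Q m
      = ∑ p ∈ Dfil L (m+1), ∑ x ∈ p.1,
          (q ^ (2 * (p.1.filter fun a => x < a).card)) • N0m L q Q p := by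
  have step1 : ∀ x, aM L q Q x * T0m L q Q m = ∑ p ∈ Dfil L m, aM L q Q x * N0m L q Q p :=
    fun x => by rw [T0m, Finset.mul_sum]
  simp only [step1]
  rw [Finset.sum_comm,
    ← sum_insertX m (fun p x => (q ^ (2 * (p.1.filter fun a => x < a).card)) • N0m L q Q p)]
  refine Finset.sum_congr rfl fun p hp => ?_
  obtain ⟨hX, hY, hdisj, hcard⟩ := mem_Dfil.mp hp
  have hvan : ∀ x ∈ Finset.Icc 1 L, aM L q Q x * N0m L q Q p ≠ 0 → (x ∉ p.1 ∧ x ∉ p.2) := by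
    intro x hx hne
    constructor
    · intro hxX
      exact hne (GMX0 hq hX hxX p.2)
    · intro hxY
      exact hne (GMY0 hq hX hY hxY (Finset.disjoint_right.mp hdisj hxY))
  rw [← Finset.sum_filter_of_ne hvan]
  refine Finset.sum_congr rfl fun x hx => ?_
  obtain ⟨hxI, hxX, hxY⟩ := Finset.mem_filter.mp hx
  simp only [N0m]
  rw [GMins0 hq hX hY hxI hxX hxY]
  congr 2
  rw [Finset.filter_insert, if_neg (lt_irrefl x)]

lemma E6 (hq : q ≠ 0) (m : ℕ) :
    ∑ x ∈ Finset.Icc 1 L, aM L q Q x * T1m L q Q m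
      = ∑ p ∈ Dfil L (m+1), ∑ x ∈ p.1,
          (q ^ (2 * (p.1.filter fun a => x < a).card)) • N1m L q Q p := by
  have step1 : ∀ x, aM L q Q x * T1m L q Q m = ∑ p ∈ Dfil L m, aM L q Q x * N1m L q Q p :=
    fun x => by rw [T1m, Finset.mul_sum]
  simp only [step1]
  rw [Finset.sum_comm,
    ← sum_insertX m (fun p x => (q ^ (2 * (p.1.filter fun a => x < a).card)) • N1m L q Q p)]
  refine Finset.sum_congr rfl fun p hp => ?_
  obtain ⟨hX, hY, hdisj, hcard⟩ := mem_Dfil.mp hp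
  have hvan : ∀ x ∈ Finset.Icc 1 L, aM L q Q x * N1m L q Q p ≠ 0 → (x ∉ p.1 ∧ x ∉ p.2) := by
    intro x hx hne
    constructor
    · intro hxX
      exact hne (GMX1 hq hX hxX p.2)
    · intro hxY
      exact hne (GMY1 hq hX hY hxY (Finset.disjoint_right.mp hdisj hxY))
  rw [← Finset.sum_filter_of_ne hvan]
  refine Finset.sum_congr rfl fun x hx => ?_
  obtain ⟨hxI, hxX, hxY⟩ := Finset.mem_filter.mp hx
  simp only [N1m]
  rw [GMins1 hq hX hY hxI hxX hxY]
  congr 2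
  rw [Finset.filter_insert, if_neg (lt_irrefl x)]

lemma coll0 (k : ℕ) :
    (∑ p ∈ Dfil L k, ∑ y ∈ p.2,
        (q ^ (2 * (p.1.card + (p.2.filter fun a => a < y).card))) • N0m L q Q p)
      + (∑ p ∈ Dfil L k, ∑ x ∈ p.1,
        (q ^ (2 * (p.1.filter fun a => x < a).card)) • N0m L q Q p)
      = (∑ i ∈ Finset.range k, q ^ (2*i)) • T0m L q Q k := by
  rw [T0m, Finset.smul_sum, ← Finset.sum_add_distrib]
  refine Finset.sum_congr rfl fun p hp => ?_
  obtain ⟨hX, hY, hdisj, hcard⟩ := mem_Dfil.mp hp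
  rw [← Finset.sum_smul, ← Finset.sum_smul, ← add_smul]
  congr 1
  have h1 : ∑ y ∈ p.2, q ^ (2 * (p.1.card + (p.2.filter fun a => a < y).card))
      = q ^ (2 * p.1.card) * ∑ i ∈ Finset.range p.2.card, q ^ (2*i) := by
    rw [← rankY p.2.card p.2 rfl, Finset.mul_sum]
    refine Finset.sum_congr rfl fun y _ => ?_
    rw [← pow_add]
    congr 1
    ring
  rw [h1, rankX p.1.card p.1 rfl, add_comm, geom_merge, hcard]

lemma coll1 (k : ℕ) :
    (∑ p ∈ Dfil L k, (q ^ (2 * p.1.card)) • N1m L q Q p)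
      + (∑ p ∈ Dfil L k, ∑ y ∈ p.2,
        (q ^ (2 * (p.1.card + 1 + (p.2.filter fun a => a < y).card))) • N1m L q Q p)
      + (∑ p ∈ Dfil L k, ∑ x ∈ p.1,
        (q ^ (2 * (p.1.filter fun a => x < a).card)) • N1m L q Q p)
      = (∑ i ∈ Finset.range (k+1), q ^ (2*i)) • T1m L q Q k := by
  rw [T1m, Finset.smul_sum, ← Finset.sum_add_distrib, ← Finset.sum_add_distrib]
  refine Finset.sum_congr rfl fun p hp => ?_
  obtain ⟨hX, hY, hdisj, hcard⟩ := mem_Dfil.mp hp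
  rw [← Finset.sum_smul, ← Finset.sum_smul, ← add_smul, ← add_smul]
  congr 1
  have h1 : ∑ y ∈ p.2, q ^ (2 * (p.1.card + 1 + (p.2.filter fun a => a < y).card))
      = q ^ (2 * p.1.card) * (q ^ 2 * ∑ i ∈ Finset.range p.2.card, q ^ (2*i)) := by
    rw [← rankY p.2.card p.2 rfl, Finset.mul_sum, Finset.mul_sum]
    refine Finset.sum_congr rfl fun y _ => ?_
    rw [← pow_add, ← pow_add]
    congr 1
    ring
  rw [h1, rankX p.1.card p.1 rfl]
  have h2 : q ^ (2 * p.1.card) + q ^ (2 * p.1.card) * (q ^ 2 * ∑ i ∈ Finset.range p.2.card, q ^ (2*i))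
      = q ^ (2 * p.1.card) * (1 + q ^ 2 * ∑ i ∈ Finset.range p.2.card, q ^ (2*i)) := by
    ring
  rw [h2, geom_succ,
    add_comm (q ^ (2 * p.1.card) * ∑ i ∈ Finset.range (p.2.card + 1), q ^ (2*i))
      (∑ i ∈ Finset.range p.1.card, q ^ (2*i)),
    geom_merge]
  have hk : p.1.card + (p.2.card + 1) = k + 1 := by omega
  rw [hk]

lemma SP1_zero :
    (∑ p ∈ Dfil L 0, ∑ y ∈ p.2,
        (q ^ (2 * (p.1.card + 1 + (p.2.filter fun a => a < y).card))) • N1m L q Q p) = 0 := by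
  refine Finset.sum_eq_zero fun p hp => ?_
  obtain ⟨-, -, -, hcard⟩ := mem_Dfil.mp hp
  have : p.2 = ∅ := Finset.card_eq_zero.mp (by omega)
  rw [this]
  simp

lemma SM1_zero :
    (∑ p ∈ Dfil L 0, ∑ x ∈ p.1,
        (q ^ (2 * (p.1.filter fun a => x < a).card)) • N1m L q Q p) = 0 := by
  refine Finset.sum_eq_zero fun p hp => ?_
  obtain ⟨-, -, -, hcard⟩ := mem_Dfil.mp hp
  have : p.1 = ∅ := Finset.card_eq_zero.mp (by omega)
  rw [this]
  simp

/-- The core step identity. -/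
lemma core (hq : q ≠ 0) (d : ℕ) :
    Ftot L q Q * Mm L q Q d
      = (∑ i ∈ Finset.range (d+1), q ^ (2*i)) • Mm L q Q (d+1) := by
  have hexp : ∀ M : Matrix (Conf L) (Conf L) ℝ, Ftot L q Q * M
      = a0 L q Q * M + (∑ y ∈ Finset.Icc 1 L, aP L q y * M)
        + ∑ x ∈ Finset.Icc 1 L, aM L q Q x * M := by
    intro M
    rw [Ftot, add_mul, add_mul, Finset.sum_mul, Finset.sum_mul]
  cases d with
  | zero =>
    rw [Mm_zero, hexp, E1 hq 0, E3 hq 0, E5 hq 0, Mm_succ, smul_add]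
    have hc1 := coll1 (L := L) (q := q) (Q := Q) 0
    rw [SP1_zero, SM1_zero, add_zero, add_zero] at hc1
    rw [hc1, ← coll0 1]
    abel
  | succ m =>
    rw [Mm_succ, hexp, mul_add, E1 hq (m+1), E2 hq m, add_zero]
    have h3 : ∀ y, aP L q y * (T0m L q Q (m+1) + T1m L q Q m)
        = aP L q y * T0m L q Q (m+1) + aP L q y * T1m L q Q m := fun y => mul_add _ _ _
    have h5 : ∀ x, aM L q Q x * (T0m L q Q (m+1) + T1m L q Q m)
        = aM L q Q x * T0m L q Q (m+1) + aM L q Q x * T1m L q Q m := fun x => mul_add _ _ _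
    simp only [h3, h5, Finset.sum_add_distrib]
    rw [E3 hq (m+1), E4 hq m, E5 hq (m+1), E6 hq m]
    rw [Mm_succ, smul_add, ← coll0 (m+2), ← coll1 (m+1)]
    abel

lemma DD_zero : Dfil L 0 = {((∅ : Finset ℕ), (∅ : Finset ℕ))} := by
  ext p
  simp only [mem_Dfil, Finset.mem_singleton]
  constructor
  · rintro ⟨-, -, -, hcard⟩
    have h1 : p.1 = ∅ := Finset.card_eq_zero.mp (by omega)
    have h2 : p.2 = ∅ := Finset.card_eq_zero.mp (by omega)
    exact Prod.ext h1 h2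
  · rintro rfl
    simp

lemma prodAM_empty : prodAM L q Q ∅ = 1 := by
  rw [prodAM, Finset.sort_empty]
  simp

lemma prodAP_empty : prodAP L q ∅ = 1 := by
  rw [prodAP, Finset.sort_empty]
  simp

lemma Mm_zero_eq_one : Mm L q Q 0 = 1 := by
  rw [Mm_zero, T0m, DD_zero, Finset.sum_singleton, N0m]
  simp [prodAM_empty, prodAP_empty]

lemma qInt_eq (hq1 : q ^ 2 ≠ 1) (n : ℕ) :
    qInt q n = ∑ i ∈ Finset.range n, q ^ (2*i) := by
  have h : ∀ i, q ^ (2*i) = (q^2) ^ i := fun i => by rw [← pow_mul]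
  simp only [h]
  rw [geom_sum_eq hq1, qInt, pow_mul]
  rw [show ((q^2)^n - 1) / (q^2 - 1) = (1 - (q^2)^n) / (1 - q^2) by
    rw [← neg_div_neg_eq]
    congr 1 <;> ring]

/-- Main matrix-level identity. -/
lemma main_identity (hq : q ≠ 0) (hq1 : q ^ 2 ≠ 1) (d : ℕ) :
    Ftot L q Q ^ d = qFact q d • Mm L q Q d := by
  induction d with
  | zero =>
    rw [pow_zero, Mm_zero_eq_one, qFact]
    simp
  | succ d ih =>
    rw [pow_succ', ih, mul_smul_comm, core hq d, smul_smul, qFact,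
      qInt_eq hq1 (d+1)]

end Final


/-- **Normally ordered expansion of `F_tot^d Ω`** (the second Lemma in the proof of
Theorem 1.3): for every `d ≥ 0`,
`F_tot^d Ω = [d]_{q²}! Σ_{(X,Y) disjoint ⊆ {1,…,L}} ( 1[|X|+|Y|=d] a⁻_X a⁺_Y
 + 1[|X|+|Y|=d−1] a⁻_X a₀ a⁺_Y ) Ω`,
the `a⁻` factors in decreasing order and the `a⁺` factors in increasing order. -/
theorem Ftot_pow_expansion (L : ℕ) (hL : 1 ≤ L)
    (q Q : ℝ) (hq0 : 0 < q) (hq1 : q < 1) (hQ0 : 0 < Q) (hQ1 : Q < 1) (d : ℕ) :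
    (Ftot L q Q) ^ d *ᵥ Omega L =
      qFact q d •
        ∑ X ∈ (Finset.Icc 1 L).powerset, ∑ Y ∈ (Finset.Icc 1 L).powerset,
          (if Disjoint X Y then
            (if X.card + Y.card = d then (1 : ℝ) else 0) •
                ((prodAM L q Q X * prodAP L q Y) *ᵥ Omega L) +
              (if X.card + Y.card + 1 = d then (1 : ℝ) else 0) •
                ((prodAM L q Q X * a0 L q Q * prodAP L q Y) *ᵥ Omega L)
          else 0) := by
  have hq : q ≠ 0 := ne_of_gt hq0
  have hq1 : q ^ 2 ≠ 1 := by nlinarith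
  have hsum : ∀ (s : Finset (Finset ℕ × Finset ℕ)) (f : Finset ℕ × Finset ℕ → Matrix (Conf L) (Conf L) ℝ),
      (∑ p ∈ s, f p) *ᵥ Omega L = ∑ p ∈ s, f p *ᵥ Omega L := by
    intro s f
    induction s using Finset.induction_on with
    | empty => simp [Matrix.zero_mulVec]
    | insert _ _ hns ih =>
      rw [Finset.sum_insert hns, Finset.sum_insert hns, Matrix.add_mulVec, ih]
  rw [main_identity hq hq1 d, Matrix.smul_mulVec]
  congr 1
  rw [Mm, hsum, DD, Finset.sum_filter, Finset.sum_product]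
  refine Finset.sum_congr rfl fun X hX => Finset.sum_congr rfl fun Y hY => ?_
  by_cases hd : Disjoint X Y
  · rw [if_pos hd, if_pos hd, Matrix.add_mulVec, Matrix.smul_mulVec,
      Matrix.smul_mulVec]
    rfl
  · rw [if_neg hd, if_neg hd]

end Stmt6

end
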